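/- Let (A,q) be a pre-metric group and (λ,ω) an associative zesting datum of (A,q). There exists a 2-cochain t ∈ C²(Â, ℂˣ) satisfying ω(χ₁,χ₂,χ₃)ω(χ₂,χ₃,χ₁)/ω(χ₂,χ₁,χ₃) = t(χ₁,χ₂)t(χ₁,χ₃)/t(χ₁,χ₂χ₃) for all χ₁,χ₂,χ₃ ∈ Â if and only if ∏_{σ ∈ S₃} ω(χ_{σ(1)}, χ_{σ(2)}, χ_{σ(3)})^{sgn(σ)} = 1 for all χ₁,χ₂,χ₃ ∈ Â. -/

import Mathlib

/-!
Statement 6: for an associative zesting datum `(λ,ω)` of a pre-metric group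
`(A,q)`, a 2-cochain `t` satisfying (BZ2) exists iff the alternating product
`∏_{σ ∈ S₃} ω(χ_{σ(1)},χ_{σ(2)},χ_{σ(3)})^{sgn σ} = 1` for all `χ₁,χ₂,χ₃`.
-/

namespace Zesting

variable {A : Type*} [CommGroup A]

/-- The bicharacter `b(x,y) = q(x)q(y)/q(xy)` associated with `q`. -/
def bchar (q : A → ℂˣ) (x y : A) : ℂˣ := q x * q y * (q (x * y))⁻¹

/-- `(A, q)` is a pre-metric group. -/
def IsPreMetric (q : A → ℂˣ) : Prop :=
  (∀ x y z, bchar q (x * y) z = bchar q x z * bchar q y z) ∧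
  (∀ x y z, bchar q x (y * z) = bchar q x y * bchar q x z) ∧
  (∀ x, q x = q x⁻¹)

/-- `A₀`, the kernel of the associated bicharacter. -/
def A0 (q : A → ℂˣ) : Set A := {x | ∀ y, q (x * y) = q x * q y}

/-- The symmetric bicharacter `c(x,y) = (−1)^{q̂(x)q̂(y)}` on `A₀`. -/
noncomputable def cc (q : A → ℂˣ) (x y : A) : ℂˣ := if q x = -1 ∧ q y = -1 then -1 else 1

/-- Inhomogeneous differential on 2-cochains (trivial action). -/
def d2 {X M : Type*} [Monoid X] [CommGroup M] (l : X → X → M) : X → X → X → M :=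
  fun a b c => l b c * (l (a * b) c)⁻¹ * l a (b * c) * (l a b)⁻¹

/-- Inhomogeneous differential on 3-cochains (trivial action). -/
def d3 {X M : Type*} [Monoid X] [CommGroup M] (w : X → X → X → M) : X → X → X → X → M :=
  fun a b c d => w b c d * (w (a * b) c d)⁻¹ * w a (b * c) d * (w a b (c * d))⁻¹ * w a b c

/-- An associative zesting datum of `(A,q)`. -/
def IsAssocZesting (q : A → ℂˣ) (l : (A →* ℂˣ) → (A →* ℂˣ) → A)
    (w : (A →* ℂˣ) → (A →* ℂˣ) → (A →* ℂˣ) → ℂˣ) : Prop :=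
  (∀ χ₁ χ₂, l χ₁ χ₂ ∈ A0 q) ∧
  (∀ χ₁ χ₂ χ₃, d2 l χ₁ χ₂ χ₃ = 1) ∧
  (∀ χ₁ χ₂ χ₃ χ₄, d3 w χ₁ χ₂ χ₃ χ₄ = cc q (l χ₁ χ₂) (l χ₃ χ₄))

/-! ### Auxiliary material for the proof -/

noncomputable instance : RootableBy ℂˣ ℕ :=
  rootableByOfPowLeftSurj _ _ (fun {n} hn y => by
    obtain ⟨w, hw⟩ := IsAlgClosed.exists_pow_nat_eq (y : ℂ) (Nat.pos_of_ne_zero hn)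
    have hw0 : w ≠ 0 := by
      intro h; apply y.ne_zero; rw [← hw, h, zero_pow hn]
    exact ⟨Units.mk0 w hw0, Units.ext (by push_cast; exact hw)⟩)

noncomputable instance : RootableBy ℂˣ ℤ := Group.rootableByIntOfRootableByNat _

noncomputable instance : DivisibleBy (Additive ℂˣ) ℤ where
  div a n := Additive.ofMul (RootableBy.root a.toMul n)
  div_zero a := by simp [RootableBy.root_zero]
  div_cancel {n} a hn := by
    have := RootableBy.root_cancel (α := ℤ) a.toMul hn
    simpa [← toMul_zsmul] using congrArg Additive.ofMul this

/-- Auxiliary carrier for the central extension of `G` by `ℂˣ` twisted by a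
symmetric normalized `2`-cocycle. -/
@[ext] structure Tw (G : Type*) where
  u : ℂˣ
  x : G

/-- Every symmetric `2`-cocycle with values in `ℂˣ` is a coboundary. -/
lemma exists_split {G : Type*} [CommGroup G] (g : G → G → ℂˣ)
    (hsym : ∀ x y, g x y = g y x)
    (hcoc : ∀ b c d, g c d * g b (c * d) = g (b * c) d * g b c) :
    ∃ f : G → ℂˣ, ∀ x y, g x y = f x * f y * (f (x * y))⁻¹ := by
  classical
  set k : ℂˣ := g 1 1 with hk
  have h1y : ∀ y, g 1 y = k := by
    intro y
    have h := hcoc 1 1 y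
    rw [one_mul, one_mul] at h
    exact mul_left_cancel h
  set gh : G → G → ℂˣ := fun x y => g x y * k⁻¹ with hgh
  have gh1 : ∀ y, gh 1 y = 1 := by intro y; simp [hgh, h1y y]
  have ghx1 : ∀ x, gh x 1 = 1 := by intro x; simp [hgh, hsym x 1, h1y x]
  have ghsym : ∀ x y, gh x y = gh y x := by intro x y; simp [hgh, hsym x y]
  have ghcoc : ∀ b c d, gh c d * gh b (c * d) = gh (b * c) d * gh b c := by
    intro b c d
    have h := hcoc b c d
    rw [← Units.val_inj] at h
    push_cast at h
    simp only [hgh]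
    rw [← Units.val_inj]
    push_cast
    field_simp
    linear_combination h
  letI : CommGroup (Tw G) :=
    { mul := fun p q => ⟨p.u * q.u * gh p.x q.x, p.x * q.x⟩
      one := ⟨1, 1⟩
      inv := fun p => ⟨p.u⁻¹ * (gh p.x p.x⁻¹)⁻¹, p.x⁻¹⟩
      mul_assoc := by
        rintro ⟨p, px⟩ ⟨r, rx⟩ ⟨s, sx⟩
        refine Tw.ext ?_ (mul_assoc _ _ _)
        show p * r * gh px rx * s * gh (px * rx) sx
            = p * (r * s * gh rx sx) * gh px (rx * sx)
        have h := ghcoc px rx sx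
        rw [← Units.val_inj] at h ⊢
        push_cast at h ⊢
        linear_combination (-(p * r * s) : ℂ) * h
      one_mul := by
        rintro ⟨p, px⟩
        refine Tw.ext ?_ (one_mul _)
        show 1 * p * gh 1 px = p
        rw [gh1]; simp
      mul_one := by
        rintro ⟨p, px⟩
        refine Tw.ext ?_ (mul_one _)
        show p * 1 * gh px 1 = p
        rw [ghx1]; simp
      inv_mul_cancel := by
        rintro ⟨p, px⟩
        refine Tw.ext ?_ (inv_mul_cancel _)
        show p⁻¹ * (gh px px⁻¹)⁻¹ * p * gh px⁻¹ px = 1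
        rw [ghsym px⁻¹ px]
        rw [← Units.val_inj]
        push_cast
        field_simp
      mul_comm := by
        rintro ⟨p, px⟩ ⟨r, rx⟩
        refine Tw.ext ?_ (mul_comm _ _)
        show p * r * gh px rx = r * p * gh rx px
        rw [ghsym px rx, mul_comm p r] }
  have gh11 : gh 1 1 = 1 := gh1 1
  let i : ℂˣ →* Tw G :=
    { toFun := fun s => ⟨s, 1⟩
      map_one' := rfl
      map_mul' := by
        intro s t
        refine (Tw.ext ?_ ?_).symm
        · show s * t * gh 1 1 = s * t
          rw [gh11, mul_one]
        · show (1 : G) * 1 = 1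
          rw [one_mul] }
  have hinj : Function.Injective (MonoidHom.toAdditive i) := by
    intro s t h
    exact congrArg Tw.u (congrArg Additive.toMul h)
  obtain ⟨r', hr'⟩ := (Module.Baer.of_divisible (Additive ℂˣ)).extension_property_addMonoidHom
    (MonoidHom.toAdditive i) hinj (AddMonoidHom.id _)
  have hri : ∀ s : ℂˣ, r' (Additive.ofMul (⟨s, 1⟩ : Tw G)) = Additive.ofMul s := by
    intro s
    exact congrFun (congrArg DFunLike.coe hr') (Additive.ofMul s)
  refine ⟨fun x => (r' (Additive.ofMul (⟨1, x⟩ : Tw G))).toMul * k, ?_⟩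
  intro x y
  have hmul : (⟨1, x⟩ : Tw G) * ⟨1, y⟩ = (⟨gh x y, 1⟩ : Tw G) * ⟨1, x * y⟩ := by
    refine Tw.ext ?_ ?_
    · show 1 * 1 * gh x y = gh x y * 1 * gh 1 (x * y)
      rw [gh1]; simp
    · show x * y = 1 * (x * y)
      rw [one_mul]
  have hr : r' (Additive.ofMul (⟨1, x⟩ : Tw G)) + r' (Additive.ofMul (⟨1, y⟩ : Tw G))
      = Additive.ofMul (gh x y) + r' (Additive.ofMul (⟨1, x * y⟩ : Tw G)) := by
    calc r' (Additive.ofMul (⟨1, x⟩ : Tw G)) + r' (Additive.ofMul (⟨1, y⟩ : Tw G))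
        = r' (Additive.ofMul (⟨1, x⟩ : Tw G) + Additive.ofMul (⟨1, y⟩ : Tw G)) :=
          (map_add r' _ _).symm
      _ = r' (Additive.ofMul ((⟨1, x⟩ : Tw G) * ⟨1, y⟩)) := rfl
      _ = r' (Additive.ofMul ((⟨gh x y, 1⟩ : Tw G) * ⟨1, x * y⟩)) := by rw [hmul]
      _ = r' (Additive.ofMul ((⟨gh x y, 1⟩ : Tw G)) + Additive.ofMul ((⟨1, x * y⟩ : Tw G))) := rfl
      _ = r' (Additive.ofMul ((⟨gh x y, 1⟩ : Tw G))) + r' (Additive.ofMul ((⟨1, x * y⟩ : Tw G))) :=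
          map_add r' _ _
      _ = Additive.ofMul (gh x y) + r' (Additive.ofMul (⟨1, x * y⟩ : Tw G)) := by rw [hri]
  have hr2 := congrArg Additive.toMul hr
  simp only [toMul_add, toMul_ofMul, hgh] at hr2
  rw [← Units.val_inj] at hr2 ⊢
  push_cast at hr2 ⊢
  field_simp at hr2
  field_simp
  linear_combination (-1 : ℂ) * hr2

/-- The combination `F(a,b,c) = w(a,b,c)w(b,c,a)/w(b,a,c)`. -/
def Fw {X : Type*} (w : X → X → X → ℂˣ) (a b c : X) : ℂˣ :=
  w a b c * w b c a * (w b a c)⁻¹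

open Equiv in
lemma prod_perm3 {M : Type*} [CommMonoid M] (f : Equiv.Perm (Fin 3) → M) :
    ∏ σ : Equiv.Perm (Fin 3), f σ =
      f 1 * f (swap 0 1) * f (swap 0 2) * f (swap 1 2) *
        f (swap 0 1 * swap 0 2) * f (swap 0 1 * swap 1 2) := by
  rw [show (Finset.univ : Finset (Equiv.Perm (Fin 3))) =
      {1, swap 0 1, swap 0 2, swap 1 2, swap 0 1 * swap 0 2, swap 0 1 * swap 1 2} from by decide]
  rw [Finset.prod_insert (by decide), Finset.prod_insert (by decide),
    Finset.prod_insert (by decide), Finset.prod_insert (by decide),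
    Finset.prod_insert (by decide), Finset.prod_singleton]
  simp [mul_assoc]

open Equiv in
lemma ratio {X : Type*} (w : X → X → X → ℂˣ) (a y z : X) :
    (∏ σ : Equiv.Perm (Fin 3),
        (w (![a, y, z] (σ 0)) (![a, y, z] (σ 1)) (![a, y, z] (σ 2))) ^
          ((Equiv.Perm.sign σ : ℤˣ) : ℤ)) =
      Fw w a y z * (Fw w a z y)⁻¹ := by
  rw [prod_perm3]
  have s1 : ((Equiv.Perm.sign (1 : Equiv.Perm (Fin 3)) : ℤˣ) : ℤ) = 1 := by decide
  have s2 : ((Equiv.Perm.sign (swap 0 1 : Equiv.Perm (Fin 3)) : ℤˣ) : ℤ) = -1 := by decide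
  have s3 : ((Equiv.Perm.sign (swap 0 2 : Equiv.Perm (Fin 3)) : ℤˣ) : ℤ) = -1 := by decide
  have s4 : ((Equiv.Perm.sign (swap 1 2 : Equiv.Perm (Fin 3)) : ℤˣ) : ℤ) = -1 := by decide
  have s5 : ((Equiv.Perm.sign (swap 0 1 * swap 0 2 : Equiv.Perm (Fin 3)) : ℤˣ) : ℤ) = 1 := by
    decide
  have s6 : ((Equiv.Perm.sign (swap 0 1 * swap 1 2 : Equiv.Perm (Fin 3)) : ℤˣ) : ℤ) = 1 := by
    decide
  rw [s1, s2, s3, s4, s5, s6]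
  norm_num
  simp only [show ((1 : Equiv.Perm (Fin 3)) 0) = 0 from by decide,
    show ((1 : Equiv.Perm (Fin 3)) 1) = 1 from by decide,
    show ((1 : Equiv.Perm (Fin 3)) 2) = 2 from by decide,
    show ((swap 0 1 : Equiv.Perm (Fin 3)) 0) = 1 from by decide,
    show ((swap 0 1 : Equiv.Perm (Fin 3)) 1) = 0 from by decide,
    show ((swap 0 1 : Equiv.Perm (Fin 3)) 2) = 2 from by decide,
    show ((swap 0 2 : Equiv.Perm (Fin 3)) 0) = 2 from by decide,
    show ((swap 0 2 : Equiv.Perm (Fin 3)) 1) = 1 from by decide,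
    show ((swap 0 2 : Equiv.Perm (Fin 3)) 2) = 0 from by decide,
    show ((swap 1 2 : Equiv.Perm (Fin 3)) 0) = 0 from by decide,
    show ((swap 1 2 : Equiv.Perm (Fin 3)) 1) = 2 from by decide,
    show ((swap 1 2 : Equiv.Perm (Fin 3)) 2) = 1 from by decide,
    show ((swap 0 1 * swap 0 2 : Equiv.Perm (Fin 3)) 0) = 2 from by decide,
    show ((swap 0 1 * swap 0 2 : Equiv.Perm (Fin 3)) 1) = 0 from by decide,
    show ((swap 0 1 * swap 0 2 : Equiv.Perm (Fin 3)) 2) = 1 from by decide,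
    show ((swap 0 1 * swap 1 2 : Equiv.Perm (Fin 3)) 0) = 1 from by decide,
    show ((swap 0 1 * swap 1 2 : Equiv.Perm (Fin 3)) 1) = 2 from by decide,
    show ((swap 0 1 * swap 1 2 : Equiv.Perm (Fin 3)) 2) = 0 from by decide]
  simp only [Matrix.cons_val_zero, Matrix.cons_val_one, Matrix.head_cons,
    show (![a, y, z] 2) = z from rfl]
  simp only [Fw]
  rw [← Units.val_inj]
  push_cast
  field_simp

/-- The coboundary of `F(a,·,·)` in terms of the zesting obstruction. -/
lemma key_lemma {X : Type*} [CommGroup X] (w : X → X → X → ℂˣ) (C : X → X → X → X → ℂˣ)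
    (hd3 : ∀ a b c d, d3 w a b c d = C a b c d) (a b c d : X) :
    Fw w a c d * Fw w a b (c * d) * (Fw w a (b * c) d)⁻¹ * (Fw w a b c)⁻¹
      = C b a c d * C b c d a * (C a b c d)⁻¹ * (C b c a d)⁻¹ := by
  have h1 := hd3 a b c d
  have h2 := hd3 b a c d
  have h3 := hd3 b c a d
  have h4 := hd3 b c d a
  simp only [d3] at h1 h2 h3 h4
  rw [show b * a = a * b from mul_comm b a] at h2
  rw [show c * a = a * c from mul_comm c a] at h3
  rw [show d * a = a * d from mul_comm d a] at h4
  calc Fw w a c d * Fw w a b (c * d) * (Fw w a (b * c) d)⁻¹ * (Fw w a b c)⁻¹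
      = (w a c d * (w (a * b) c d)⁻¹ * w b (a * c) d * (w b a (c * d))⁻¹ * w b a c) *
          (w c d a * (w (b * c) d a)⁻¹ * w b (c * d) a * (w b c (a * d))⁻¹ * w b c d) *
          (w b c d * (w (a * b) c d)⁻¹ * w a (b * c) d * (w a b (c * d))⁻¹ * w a b c)⁻¹ *
          (w c a d * (w (b * c) a d)⁻¹ * w b (a * c) d * (w b c (a * d))⁻¹ * w b c a)⁻¹ := by
        simp only [Fw]
        rw [← Units.val_inj]
        push_cast
        field_simp
    _ = C b a c d * C b c d a * (C a b c d)⁻¹ * (C b c a d)⁻¹ := by rw [h1, h2, h3, h4]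

/-- For an associative zesting datum `(λ,ω)` of a pre-metric
group `(A,q)`, there exists `t ∈ C²(Â,ℂˣ)` satisfying (BZ2) if and only if
`∏_{σ ∈ S₃} ω(χ_{σ(1)},χ_{σ(2)},χ_{σ(3)})^{sgn(σ)} = 1` for all `χ₁,χ₂,χ₃ ∈ Â`. -/
theorem statement6 [Finite A] (q : A → ℂˣ) (hq : IsPreMetric q)
    (l : (A →* ℂˣ) → (A →* ℂˣ) → A)
    (w : (A →* ℂˣ) → (A →* ℂˣ) → (A →* ℂˣ) → ℂˣ)
    (hz : IsAssocZesting q l w) :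
    (∃ t : (A →* ℂˣ) → (A →* ℂˣ) → ℂˣ, ∀ χ₁ χ₂ χ₃,
        w χ₁ χ₂ χ₃ * w χ₂ χ₃ χ₁ / w χ₂ χ₁ χ₃ = t χ₁ χ₂ * t χ₁ χ₃ / t χ₁ (χ₂ * χ₃)) ↔
      (∀ χ₁ χ₂ χ₃ : A →* ℂˣ,
        ∏ σ : Equiv.Perm (Fin 3),
          (w (![χ₁, χ₂, χ₃] (σ 0)) (![χ₁, χ₂, χ₃] (σ 1)) (![χ₁, χ₂, χ₃] (σ 2))) ^
            ((Equiv.Perm.sign σ : ℤˣ) : ℤ) = 1) := by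
  constructor
  · -- forward direction
    rintro ⟨t, ht⟩ χ₁ χ₂ χ₃
    rw [ratio w χ₁ χ₂ χ₃]
    have e1 := ht χ₁ χ₂ χ₃
    have e2 := ht χ₁ χ₃ χ₂
    rw [show χ₃ * χ₂ = χ₂ * χ₃ from mul_comm χ₃ χ₂] at e2
    rw [div_eq_mul_inv, div_eq_mul_inv] at e1 e2
    have eF1 : Fw w χ₁ χ₂ χ₃ = t χ₁ χ₂ * t χ₁ χ₃ * (t χ₁ (χ₂ * χ₃))⁻¹ := e1
    have eF2 : Fw w χ₁ χ₃ χ₂ = t χ₁ χ₃ * t χ₁ χ₂ * (t χ₁ (χ₂ * χ₃))⁻¹ := e2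
    rw [eF1, eF2]
    rw [← Units.val_inj]
    push_cast
    field_simp
  · -- backward direction
    intro hP
    -- symmetry of F
    have hsym : ∀ a y z, Fw w a y z = Fw w a z y := by
      intro a y z
      have h := hP a y z
      rw [ratio w a y z] at h
      exact mul_inv_eq_one.mp h
    -- q(1) = 1
    have q1 : q 1 = 1 := by
      have h := hq.1 1 1 1
      simp only [bchar, one_mul, mul_inv_cancel_right] at h
      exact (mul_eq_right.mp h.symm)
    -- q on A₀ is ±1
    have hpm : ∀ x y : A →* ℂˣ, q (l x y) = 1 ∨ q (l x y) = -1 := by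
      intro x y
      have h := hz.1 x y (l x y)⁻¹
      rw [mul_inv_cancel, q1, ← hq.2.2 (l x y)] at h
      have h2 : ((q (l x y) : ℂ)) * ((q (l x y) : ℂ)) = 1 := by
        have h3 := congrArg Units.val h.symm
        push_cast at h3
        exact h3
      rcases mul_self_eq_one_iff.mp h2 with h3 | h3
      · left; exact Units.ext h3
      · right; exact Units.ext (by rw [h3]; simp)
    have hne1 : ¬((1 : ℂˣ) = -1) := by
      intro h
      have := congrArg Units.val h
      norm_num at this
    -- the C-notation
    set C : (A →* ℂˣ) → (A →* ℂˣ) → (A →* ℂˣ) → (A →* ℂˣ) → ℂˣ :=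
      fun a b c d => cc q (l a b) (l c d) with hC
    have hd3 : ∀ a b c d, d3 w a b c d = C a b c d := fun a b c d => hz.2.2 a b c d
    -- symmetry of q ∘ l
    have hqsym : ∀ u v, q (l u v) = q (l v u) := by
      intro u v
      have k1 := key_lemma w C hd3 v u u v
      have k2 := key_lemma w C hd3 v v u u
      have k3 : (Fw w v u v * Fw w v u (u * v) * (Fw w v (u * u) v)⁻¹ * (Fw w v u u)⁻¹) *
          (Fw w v u u * Fw w v v (u * u) * (Fw w v (v * u) u)⁻¹ * (Fw w v v u)⁻¹) = 1 := by
        rw [hsym v u v, hsym v u (u * v), hsym v v (u * u),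
          show v * u = u * v from mul_comm v u]
        rw [← Units.val_inj]
        push_cast
        field_simp
      rw [k1, k2] at k3
      have hCC : C u v u v = C v u v u := by
        rw [← mul_inv_eq_one]
        calc C u v u v * (C v u v u)⁻¹
            = (C u v u v * C u u v v * (C v u u v)⁻¹ * (C u u v v)⁻¹) *
              (C v v u u * C v u u v * (C v v u u)⁻¹ * (C v u v u)⁻¹) := by
              rw [← Units.val_inj]
              push_cast
              field_simp
          _ = 1 := k3
      simp only [hC, cc] at hCC
      rcases hpm u v with h | h <;> rcases hpm v u with h' | h' <;> rw [h, h']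
      · exfalso
        rw [h, h'] at hCC
        simp [hne1] at hCC
      · exfalso
        rw [h, h'] at hCC
        simp [hne1] at hCC
    -- cocycle property of F(a,·,·)
    have hcoc : ∀ a b c d,
        Fw w a c d * Fw w a b (c * d) = Fw w a (b * c) d * Fw w a b c := by
      intro a b c d
      have k := key_lemma w C hd3 a b c d
      have e1 : C b a c d = C a b c d := by
        simp only [hC, cc, hqsym b a]
      have e2 : C b c d a = C b c a d := by
        simp only [hC, cc, hqsym d a]
      rw [e1, e2] at k
      have k' : Fw w a c d * Fw w a b (c * d) * (Fw w a (b * c) d)⁻¹ * (Fw w a b c)⁻¹ = 1 := by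
        rw [k]
        rw [← Units.val_inj]
        push_cast
        field_simp
      rw [← Units.val_inj] at k' ⊢
      push_cast at k' ⊢
      field_simp at k'
      linear_combination k'
    have H : ∀ a, ∃ f : (A →* ℂˣ) → ℂˣ, ∀ x y, Fw w a x y = f x * f y * (f (x * y))⁻¹ :=
      fun a => exists_split (Fw w a) (fun x y => hsym a x y) (fun b c d => hcoc a b c d)
    choose t ht using H
    refine ⟨t, fun a b c => ?_⟩
    rw [div_eq_mul_inv, div_eq_mul_inv]
    exact ht a b c

end Zesting
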